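/- Let H be a real Hilbert space, let 0 ≤ p ≤ 1 and δ ≥ 0, and let ε satisfy 0 < ε < 1/(2+2δ). Let w₀ ∈ H and let θ_ε : [0,∞) → H be the solution of ε θ_ε''(t) + (1+t)^{-p} θ_ε'(t) = 0 with θ_ε(0) = 0 and θ_ε'(0) = w₀. Then there exists a constant C_δ > 0, depending only on δ and p and independent of ε and of w₀, such that ∫₀^∞ (1+t)^{δ} |θ_ε'(t)| dt ≤ C_δ |w₀| ε. -/

import Mathlib

open Real MeasureTheory
open scoped RealInnerProductSpace

/-- `θ` (with derivatives `θ'`, `θ''`) is the corrector: the solution of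
`ε θ'' + (1+t)^{-p} θ' = 0`, `θ(0) = 0`, `θ'(0) = w₀`. -/
def IsCorrector {H : Type*} [NormedAddCommGroup H] [InnerProductSpace ℝ H]
    (p ε : ℝ) (w₀ : H) (θ θ' θ'' : ℝ → H) : Prop :=
  θ 0 = 0 ∧ θ' 0 = w₀ ∧
  (∀ t ∈ Set.Ici (0:ℝ), HasDerivWithinAt θ (θ' t) (Set.Ici 0) t) ∧
  (∀ t ∈ Set.Ici (0:ℝ), HasDerivWithinAt θ' (θ'' t) (Set.Ici 0) t) ∧
  (∀ t ∈ Set.Ici (0:ℝ), ε • θ'' t + ((1+t) ^ (-p)) • θ' t = 0)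

lemma rpow_shift_integral (b : ℝ) (hb : b < -1) :
    IntegrableOn (fun t => (1+t) ^ b) (Set.Ioi (0:ℝ)) ∧
    ∫ t in Set.Ioi (0:ℝ), (1+t) ^ b = -1/(b+1) := by
  have hb1 : b + 1 < 0 := by linarith
  set g : ℝ → ℝ := fun t => (1+t) ^ (b+1) / (b+1) with hg
  have hderiv : ∀ x ∈ Set.Ici (0:ℝ), HasDerivAt g ((1+x) ^ b) x := by
    intro x hx
    have h1x : (0:ℝ) < 1 + x := by simp at hx; linarith
    have h := Real.hasDerivAt_rpow_const (x := 1+x) (p := b+1) (Or.inl h1x.ne')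
    have h2 : HasDerivAt (fun u : ℝ => 1 + u) 1 x := (hasDerivAt_id x).const_add 1
    have h3 := (h.comp x h2).div_const (b+1)
    refine h3.congr_deriv ?_
    symm
    rw [add_sub_cancel_right, mul_one, mul_comm, mul_div_assoc,
      div_self hb1.ne, mul_one]
  have hpos : ∀ x ∈ Set.Ioi (0:ℝ), 0 ≤ (1+x) ^ b := fun x hx =>
    Real.rpow_nonneg (by simp at hx; linarith) _
  have htend : Filter.Tendsto g Filter.atTop (nhds 0) := by
    have h1 : Filter.Tendsto (fun t:ℝ => 1 + t) Filter.atTop Filter.atTop :=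
      Filter.tendsto_atTop_add_const_left _ _ Filter.tendsto_id
    have h2 : Filter.Tendsto (fun u:ℝ => u ^ (b+1)) Filter.atTop (nhds 0) := by
      have := tendsto_rpow_neg_atTop (y := -(b+1)) (by linarith)
      simpa using this
    have := (h2.comp h1).div_const (b+1)
    simpa [hg, Function.comp] using this
  refine ⟨integrableOn_Ioi_deriv_of_nonneg' hderiv hpos htend, ?_⟩
  rw [integral_Ioi_of_hasDerivAt_of_nonneg' hderiv hpos htend]
  simp [hg, Real.one_rpow, neg_div]


section Rep
variable {H : Type*} [NormedAddCommGroup H] [InnerProductSpace ℝ H]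
variable {p ε : ℝ} {w₀ : H} {θ θ' θ'' : ℝ → H}

lemma corrector_norm_rep (hp0 : 0 ≤ p) (hε : 0 < ε)
    (hc : IsCorrector p ε w₀ θ θ' θ'')
    {F : ℝ → ℝ} (hF : F = fun t => ∫ s in (0:ℝ)..t, (1+s) ^ (-p)) :
    ∀ t ∈ Set.Ici (0:ℝ), ‖θ' t‖ = Real.exp (-(F t)/ε) * ‖w₀‖ := by
  obtain ⟨h0, hw, hθd, hθ'd, hode⟩ := hc
  have hcont : ∀ s ∈ Set.Ioi (-1:ℝ), ContinuousAt (fun u : ℝ => (1+u) ^ (-p)) s := by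
    intro s hs
    simp only [Set.mem_Ioi] at hs
    have : ContinuousAt (fun u : ℝ => 1 + u) s := by fun_prop
    exact this.rpow_const (Or.inl (by simp; linarith))
  have hFd : ∀ t ∈ Set.Ici (0:ℝ), HasDerivAt F ((1+t) ^ (-p)) t := by
    intro t ht
    simp only [Set.mem_Ici] at ht
    have hint : IntervalIntegrable (fun u : ℝ => (1+u) ^ (-p)) volume 0 t := by
      apply ContinuousOn.intervalIntegrable
      intro s hs
      have hs0 : -1 < s := by
        rcases Set.mem_uIcc.1 hs with h | h
        · linarith [h.1]
        · linarith [h.1, ht]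
      exact (hcont s hs0).continuousWithinAt
    rw [hF]
    exact intervalIntegral.integral_hasDerivAt_right hint
      (ContinuousAt.stronglyMeasurableAtFilter isOpen_Ioi hcont t (by simp; linarith))
      (hcont t (by simp; linarith))
  set ψ : ℝ → H := fun u => Real.exp (F u / ε) • θ' u with hψ
  have hψd : ∀ x ∈ Set.Ici (0:ℝ), HasDerivWithinAt ψ 0 (Set.Ici 0) x := by
    intro x hx
    have hcd : HasDerivWithinAt (fun u => Real.exp (F u / ε))
        (Real.exp (F x / ε) * ((1+x) ^ (-p) / ε)) (Set.Ici 0) x :=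
      (((hFd x hx).hasDerivWithinAt.div_const ε).exp)
    have h := hcd.smul (hθ'd x hx)
    have hode' : θ'' x = -((ε⁻¹ * (1+x) ^ (-p)) • θ' x) := by
      have h2 := hode x hx
      have : ε • θ'' x = -(((1+x) ^ (-p)) • θ' x) := by
        rw [← add_eq_zero_iff_eq_neg]; exact h2
      have h3 := congrArg (fun v => ε⁻¹ • v) this
      simp only [smul_smul, inv_mul_cancel₀ hε.ne', one_smul, smul_neg] at h3
      exact h3
    have hz : Real.exp (F x / ε) • θ'' x
        + (Real.exp (F x / ε) * ((1+x) ^ (-p) / ε)) • θ' x = 0 := by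
      rw [hode']
      rw [smul_neg, smul_smul, ← neg_smul, ← add_smul]
      convert zero_smul ℝ (θ' x) using 2
      field_simp
      ring
    rw [hz] at h
    exact h
  have hψc : ∀ t ∈ Set.Ici (0:ℝ), ψ t = w₀ := by
    intro t ht
    simp only [Set.mem_Ici] at ht
    have hF0 : F 0 = 0 := by rw [hF]; simp
    have hψ0 : ψ 0 = w₀ := by simp [hψ, hF0, hw]
    rcases eq_or_lt_of_le ht with h | h
    · rw [← h, hψ0]
    · have hconst := constant_of_has_deriv_right_zero (f := ψ) (a := 0) (b := t)
        (fun x hx => ((hψd x hx.1).mono (Set.Icc_subset_Ici_self)).continuousWithinAt)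
        (fun x hx => (hψd x hx.1).mono (Set.Ici_subset_Ici.2 hx.1))
      rw [hconst t (Set.right_mem_Icc.2 ht), hψ0]
  intro t ht
  have := congrArg norm (hψc t ht)
  rw [hψ] at this
  simp only [norm_smul, Real.norm_eq_abs, abs_of_pos (Real.exp_pos _)] at this
  have h2 : ‖θ' t‖ = ‖w₀‖ / Real.exp (F t / ε) := by
    rw [eq_div_iff (Real.exp_pos _).ne', mul_comm]
    exact this
  rw [h2, neg_div, Real.exp_neg, div_eq_mul_inv, mul_comm]

end Rep

lemma F_ge_log (p : ℝ) (hp1 : p ≤ 1) {t : ℝ} (ht : 0 ≤ t) :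
    Real.log (1+t) ≤ ∫ s in (0:ℝ)..t, (1+s) ^ (-p) := by
  have huIcc : Set.uIcc (0:ℝ) t = Set.Icc 0 t := Set.uIcc_of_le ht
  have hci : ∀ (q : ℝ), IntervalIntegrable (fun s : ℝ => (1+s) ^ (-q)) volume 0 t := by
    intro q
    apply ContinuousOn.intervalIntegrable
    intro s hs
    rw [huIcc] at hs
    have : ContinuousAt (fun u : ℝ => 1 + u) s := by fun_prop
    exact (this.rpow_const (Or.inl (by simp; linarith [hs.1]))).continuousWithinAt
  have heq : ∫ s in (0:ℝ)..t, (1+s) ^ (-(1:ℝ)) = Real.log (1+t) := by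
    have hd : ∀ s ∈ Set.uIcc (0:ℝ) t,
        HasDerivAt (fun u => Real.log (1+u)) ((1+s) ^ (-(1:ℝ))) s := by
      intro s hs
      rw [huIcc] at hs
      have h1 : HasDerivAt (fun u : ℝ => 1+u) 1 s := (hasDerivAt_id s).const_add 1
      have h2 := h1.log (by linarith [hs.1] : (1:ℝ)+s ≠ 0)
      convert h2 using 1
      rw [Real.rpow_neg_one, one_div]
    rw [intervalIntegral.integral_eq_sub_of_hasDerivAt hd (hci 1)]
    simp
  rw [← heq]
  apply intervalIntegral.integral_mono_on ht (hci 1) (hci p)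
  intro s hs
  exact Real.rpow_le_rpow_of_exponent_le (by linarith [hs.1]) (by linarith)

/-- Lemma 3.5: for `0 ≤ p ≤ 1`, `δ ≥ 0`, and `0 < ε < (2+2δ)⁻¹`, there is a constant
`C_δ > 0` independent of `ε` and `w₀` with `∫₀^∞ (1+t)^δ |θ_ε'(t)| dt ≤ C_δ |w₀| ε`. -/
theorem corrector_integral_estimate
    {H : Type*} [NormedAddCommGroup H] [InnerProductSpace ℝ H]
    (p δ : ℝ) (hp0 : 0 ≤ p) (hp1 : p ≤ 1) (hδ : 0 ≤ δ) :
    ∃ C > 0, ∀ ε : ℝ, 0 < ε → ε < 1/(2+2*δ) → ∀ w₀ : H, ∀ θ θ' θ'' : ℝ → H,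
      IsCorrector p ε w₀ θ θ' θ'' →
      IntegrableOn (fun t => (1+t) ^ δ * ‖θ' t‖) (Set.Ici (0:ℝ)) ∧
      ∫ t in Set.Ici (0:ℝ), (1+t) ^ δ * ‖θ' t‖ ≤ C * ‖w₀‖ * ε := by
  refine ⟨2, by norm_num, ?_⟩
  intro ε hε hε' w₀ θ θ' θ'' hc
  have hδ2 : (0:ℝ) < 2 + 2*δ := by linarith
  have h1 : ε * (2+2*δ) < 1 := (lt_div_iff₀ hδ2).1 hε'
  have hεinv : ε * (1/ε) = 1 := mul_one_div_cancel hε.ne'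
  have hεinv2 : 2 + 2*δ < 1/ε := by
    rw [lt_div_iff₀ hε]; nlinarith
  set F : ℝ → ℝ := fun t => ∫ s in (0:ℝ)..t, (1+s) ^ (-p) with hF
  have hrep := corrector_norm_rep hp0 hε hc hF
  set b : ℝ := δ - 1/ε with hb
  have hblt : b < -1 := by rw [hb]; linarith
  obtain ⟨hint_b, hval_b⟩ := rpow_shift_integral b hblt
  have key : ∀ t ∈ Set.Ici (0:ℝ), (1+t) ^ δ * ‖θ' t‖ ≤ (1+t) ^ b * ‖w₀‖ := by
    intro t ht
    have ht' : (0:ℝ) ≤ t := ht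
    have h1t : (0:ℝ) < 1 + t := by linarith
    rw [hrep t ht]
    have hFlog : Real.log (1+t) ≤ F t := F_ge_log p hp1 ht'
    have hexp : Real.exp (-(F t)/ε) ≤ (1+t) ^ (-(1/ε)) := by
      rw [Real.rpow_def_of_pos h1t]
      apply Real.exp_le_exp.2
      have hq : Real.log (1+t) * (-(1/ε)) = -(Real.log (1+t) / ε) := by ring
      rw [hq, neg_div, neg_le_neg_iff]
      gcongr
    calc (1+t) ^ δ * (Real.exp (-(F t)/ε) * ‖w₀‖)
        ≤ (1+t) ^ δ * ((1+t) ^ (-(1/ε)) * ‖w₀‖) := by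
          apply mul_le_mul_of_nonneg_left _ (Real.rpow_nonneg h1t.le _)
          exact mul_le_mul_of_nonneg_right hexp (norm_nonneg _)
      _ = (1+t) ^ b * ‖w₀‖ := by
          rw [← mul_assoc, ← Real.rpow_add h1t, hb]
          ring_nf
  obtain ⟨h0, hw, hθd, hθ'd, hode⟩ := hc
  have hcontθ : ContinuousOn (fun t => (1+t) ^ δ * ‖θ' t‖) (Set.Ici (0:ℝ)) := by
    apply ContinuousOn.mul
    · exact (ContinuousOn.rpow_const (by fun_prop) (fun x hx => Or.inr hδ))
    · exact ContinuousOn.norm (fun x hx => (hθ'd x hx).continuousWithinAt)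
  have haesm : AEStronglyMeasurable (fun t => (1+t) ^ δ * ‖θ' t‖)
      (volume.restrict (Set.Ici (0:ℝ))) :=
    hcontθ.aestronglyMeasurable measurableSet_Ici
  have hg_int : IntegrableOn (fun t => (1+t) ^ b * ‖w₀‖) (Set.Ici (0:ℝ)) := by
    rw [integrableOn_Ici_iff_integrableOn_Ioi]
    exact hint_b.mul_const _
  have hf_int : IntegrableOn (fun t => (1+t) ^ δ * ‖θ' t‖) (Set.Ici (0:ℝ)) := by
    apply Integrable.mono' hg_int haesm
    rw [ae_restrict_iff' measurableSet_Ici]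
    filter_upwards with t
    intro ht
    have ht' : (0:ℝ) ≤ t := ht
    rw [Real.norm_eq_abs, abs_of_nonneg (by positivity)]
    exact key t ht
  refine ⟨hf_int, ?_⟩
  have hmono : ∫ t in Set.Ici (0:ℝ), (1+t) ^ δ * ‖θ' t‖
      ≤ ∫ t in Set.Ici (0:ℝ), (1+t) ^ b * ‖w₀‖ :=
    setIntegral_mono_on hf_int hg_int measurableSet_Ici key
  have hval : ∫ t in Set.Ici (0:ℝ), (1+t) ^ b * ‖w₀‖ = (-1/(b+1)) * ‖w₀‖ := by
    rw [integral_Ici_eq_integral_Ioi, integral_mul_const, hval_b]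
  have h2ε : -1/(b+1) ≤ 2*ε := by
    have hb1 : b + 1 < 0 := by linarith
    rw [div_le_iff_of_neg hb1, hb]
    nlinarith
  calc ∫ t in Set.Ici (0:ℝ), (1+t) ^ δ * ‖θ' t‖ ≤ (-1/(b+1)) * ‖w₀‖ := by
        rw [← hval]; exact hmono
    _ ≤ (2*ε) * ‖w₀‖ := mul_le_mul_of_nonneg_right h2ε (norm_nonneg _)
    _ = 2 * ‖w₀‖ * ε := by ring
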